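/- For every n ≥ 2, the number of ascent sequences of length n avoiding the pattern 210 and having exactly one ascent equals binom(n, 2). -/

import Mathlib

/-- Number of ascents of a sequence of non-negative integers:
indices `j` with `x j < x (j+1)`. -/
def ascents (l : List ℕ) : ℕ :=
  ((l.zip l.tail).filter (fun p => p.1 < p.2)).length

/-- `x` is an ascent sequence: it starts with 0 and each subsequent letter is at most
one more than the number of ascents of the preceding prefix. -/
def IsAscentSeq (x : List ℕ) : Prop :=
  (∀ h : 0 < x.length, x.get ⟨0, h⟩ = 0) ∧
  ∀ i : Fin x.length, 0 < (i : ℕ) → x.get i ≤ ascents (x.take (i : ℕ)) + 1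

/-- `p` contains the pattern `t`: `p` has a subsequence order-isomorphic to `t`. -/
def Contains (p t : List ℕ) : Prop :=
  ∃ f : Fin t.length → Fin p.length, StrictMono f ∧
    ∀ i j : Fin t.length, t.get i < t.get j ↔ p.get (f i) < p.get (f j)

/-- `p` avoids the pattern `t`. -/
def Avoids (p t : List ℕ) : Prop := ¬ Contains p t

lemma ascents_nil : ascents [] = 0 := rfl

lemma ascents_single (a : ℕ) : ascents [a] = 0 := rfl

lemma ascents_cons (a b : ℕ) (l : List ℕ) :
    ascents (a :: b :: l) = (if a < b then 1 else 0) + ascents (b :: l) := by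
  simp only [ascents, List.zip, List.tail]
  rw [List.zipWith_cons_cons, List.filter_cons]
  by_cases h : a < b <;> simp [h, Nat.add_comm]

lemma ascents_le_append (l1 l2 : List ℕ) : ascents l1 ≤ ascents (l1 ++ l2) := by
  induction l1 with
  | nil => simp [ascents_nil]
  | cons a t ih =>
    cases t with
    | nil => simp [ascents_single]
    | cons b t' =>
      rw [show (a::b::t') ++ l2 = a :: ((b::t') ++ l2) from rfl]
      rw [show (b::t') ++ l2 = b :: (t' ++ l2) from rfl]
      rw [ascents_cons, ascents_cons]
      have := ih
      rw [show (b::t') ++ l2 = b :: (t' ++ l2) from rfl] at this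
      omega

lemma ascents_concat2 (l : List ℕ) (u v : ℕ) :
    ascents (l ++ [u, v]) = ascents (l ++ [u]) + (if u < v then 1 else 0) := by
  induction l with
  | nil => simp [ascents_cons, ascents_single, Nat.add_comm]
  | cons a t ih =>
    cases t with
    | nil => simp [ascents_cons, ascents_single]
    | cons b t' =>
      rw [show (a::b::t') ++ [u,v] = a :: ((b::t') ++ [u,v]) from rfl]
      rw [show (a::b::t') ++ [u] = a :: ((b::t') ++ [u]) from rfl]
      rw [show (b::t') ++ [u,v] = b :: (t' ++ [u,v]) from rfl]
      rw [show (b::t') ++ [u] = b :: (t' ++ [u]) from rfl]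
      rw [ascents_cons, ascents_cons]
      rw [show b :: (t' ++ [u,v]) = (b::t') ++ [u,v] from rfl]
      rw [show b :: (t' ++ [u]) = (b::t') ++ [u] from rfl, ih]
      omega

lemma ascents_replicate_cons (k v : ℕ) (l : List ℕ) :
    ascents (List.replicate (k+1) v ++ l) = ascents (v :: l) := by
  induction k with
  | zero => simp
  | succ k ih =>
    rw [show List.replicate (k+2) v ++ l = v :: (List.replicate (k+1) v ++ l) from rfl]
    rw [show List.replicate (k+1) v ++ l = v :: (List.replicate k v ++ l) from rfl]
    rw [ascents_cons]
    rw [show v :: (List.replicate k v ++ l) = List.replicate (k+1) v ++ l from rfl, ih]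
    simp

lemma shape_zero (l : List ℕ) (hle : ∀ v ∈ l, v ≤ 1) (h : ascents (0 :: l) = 0) :
    0 :: l = List.replicate (l.length + 1) 0 := by
  induction l with
  | nil => rfl
  | cons y t ih =>
    rw [ascents_cons] at h
    have hy : ¬ 0 < y := by by_contra hc; simp [hc] at h
    have hy0 : y = 0 := by omega
    subst hy0
    simp at h
    have := ih (fun v hv => hle v (List.mem_cons_of_mem _ hv)) h
    rw [List.length_cons, List.replicate_succ, ← this]

lemma shape_one (l : List ℕ) (hle : ∀ v ∈ l, v ≤ 1) (h : ascents (1 :: l) = 0) :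
    ∃ q r, 1 ≤ q ∧ 1 :: l = List.replicate q 1 ++ List.replicate r 0 := by
  induction l with
  | nil => exact ⟨1, 0, le_refl _, by simp⟩
  | cons y t ih =>
    rw [ascents_cons] at h
    have hy : y ≤ 1 := hle y (by simp)
    have hny : ¬ 1 < y := by omega
    rw [if_neg hny] at h
    simp at h
    rcases Nat.lt_or_ge y 1 with hy0 | hy1
    · have hy0 : y = 0 := by omega
      subst hy0
      have := shape_zero t (fun v hv => hle v (List.mem_cons_of_mem _ hv)) h
      refine ⟨1, t.length + 1, le_refl _, ?_⟩
      simp [this]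
    · have hy1 : y = 1 := by omega
      subst hy1
      obtain ⟨q, r, hq, heq⟩ := ih (fun v hv => hle v (List.mem_cons_of_mem _ hv)) h
      exact ⟨q + 1, r, by omega, by rw [List.replicate_succ]; simp [heq]⟩

lemma shape_main (l : List ℕ) (hle : ∀ v ∈ l, v ≤ 1) (h : ascents (0 :: l) = 1) :
    ∃ p q r, 1 ≤ p ∧ 1 ≤ q ∧
      0 :: l = List.replicate p 0 ++ List.replicate q 1 ++ List.replicate r 0 := by
  induction l with
  | nil => simp [ascents_single] at h
  | cons y t ih =>
    rw [ascents_cons] at h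
    have hy : y ≤ 1 := hle y (by simp)
    rcases Nat.lt_or_ge y 1 with hy0 | hy1
    · have hy0 : y = 0 := by omega
      subst hy0
      simp at h
      obtain ⟨p, q, r, hp, hq, heq⟩ := ih (fun v hv => hle v (List.mem_cons_of_mem _ hv)) h
      refine ⟨p + 1, q, r, by omega, hq, ?_⟩
      rw [List.replicate_succ]
      simp [heq]
    · have hy1 : y = 1 := by omega
      subst hy1
      simp at h
      obtain ⟨q, r, hq, heq⟩ := shape_one t (fun v hv => hle v (List.mem_cons_of_mem _ hv)) h
      exact ⟨1, q, r, le_refl _, hq, by simp [heq]⟩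

lemma le_one_of_ascents_le_one (x : List ℕ) (hx : IsAscentSeq x) (h1 : ascents x ≤ 1) :
    ∀ v ∈ x, v ≤ 1 := by
  suffices H : ∀ k, ∀ hk : k < x.length, x[k] ≤ 1 by
    intro v hv
    obtain ⟨i, hi, rfl⟩ := List.mem_iff_getElem.mp hv
    exact H i hi
  intro k
  induction k using Nat.strong_induction_on with
  | _ k ih =>
    intro hk
    match k, hk with
    | 0, hk =>
      have := hx.1 hk
      simp only [List.get_eq_getElem] at this
      omega
    | (j+1), hk =>
      by_contra hc
      push_neg at hc
      have hbd := hx.2 ⟨j+1, hk⟩ (by simp)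
      simp only [List.get_eq_getElem] at hbd
      have hprev : x[j] ≤ 1 := ih j (by omega) (by omega)
      have hasc1 : 1 ≤ ascents (x.take (j+1)) := by omega
      have e1 : x.take (j+1) = x.take j ++ [x[j]] := by
        rw [List.take_succ, List.getElem?_eq_getElem (by omega : j < x.length)]
        rfl
      have e2 : x.take (j+1+1) = x.take (j+1) ++ [x[j+1]] := by
        rw [List.take_succ, List.getElem?_eq_getElem (hk : j+1 < x.length)]
        rfl
      rw [e1] at e2
      have e2' : x.take (j+2) = x.take j ++ [x[j], x[j+1]] := by
        rw [show j+2 = j+1+1 from rfl, e2, List.append_assoc]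
        rfl
      have e3 : ascents (x.take (j+2)) = ascents (x.take (j+1)) + 1 := by
        rw [e2', ascents_concat2, ← e1, if_pos (by omega)]
      have e4 : ascents (x.take (j+2)) ≤ ascents x := by
        have := ascents_le_append (x.take (j+2)) (x.drop (j+2))
        rwa [List.take_append_drop] at this
      omega

lemma takeWhile_zero (p : ℕ) (rest : List ℕ) :
    (List.replicate p 0 ++ 1 :: rest).takeWhile (fun z => z == 0) = List.replicate p 0 := by
  induction p with
  | zero => simp [List.takeWhile]
  | succ p ih => rw [List.replicate_succ]; simp [List.takeWhile, ih]

lemma takeWhile_one (q r : ℕ) :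
    (List.replicate q 1 ++ List.replicate r 0).takeWhile (fun z => z == 1)
      = List.replicate q 1 := by
  induction q with
  | zero =>
    cases r with
    | zero => simp
    | succ r => rw [List.replicate_succ]; simp [List.takeWhile]
  | succ q ih => rw [List.replicate_succ]; simp [List.takeWhile, ih]

lemma mem_canon_le_one (p q r v : ℕ)
    (hv : v ∈ List.replicate p 0 ++ (List.replicate q 1 ++ List.replicate r 0)) : v ≤ 1 := by
  simp only [List.mem_append, List.mem_replicate] at hv
  rcases hv with ⟨_, rfl⟩ | (⟨_, rfl⟩ | ⟨_, rfl⟩) <;> omega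

lemma avoids_of_le_one (x : List ℕ) (hle : ∀ v ∈ x, v ≤ 1) : Avoids x [2, 1, 0] := by
  rintro ⟨f, -, hiff⟩
  set i0 : Fin [2,1,0].length := ⟨0, by norm_num⟩
  set i1 : Fin [2,1,0].length := ⟨1, by norm_num⟩
  set i2 : Fin [2,1,0].length := ⟨2, by norm_num⟩
  have h10 : x.get (f i1) < x.get (f i0) := (hiff i1 i0).mp (by norm_num [i0, i1])
  have h21 : x.get (f i2) < x.get (f i1) := (hiff i2 i1).mp (by norm_num [i1, i2])
  have hx0 : x.get (f i0) ≤ 1 := hle _ (List.mem_iff_get.mpr ⟨f i0, rfl⟩)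
  omega

lemma ascents_canon (a b c : ℕ) :
    ascents (List.replicate (a+1) 0 ++ (List.replicate (b+1) 1 ++ List.replicate c 0)) = 1 := by
  rw [ascents_replicate_cons]
  rw [show List.replicate (b+1) 1 ++ List.replicate c 0
      = 1 :: (List.replicate b 1 ++ List.replicate c 0) from by rw [List.replicate_succ]; rfl]
  rw [ascents_cons, if_pos (by norm_num)]
  rw [show (1:ℕ) :: (List.replicate b 1 ++ List.replicate c 0)
      = List.replicate (b+1) 1 ++ List.replicate c 0 from by rw [List.replicate_succ]; rfl]
  rw [ascents_replicate_cons]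
  cases c with
  | zero => simp [ascents_single]
  | succ c =>
    rw [List.replicate_succ, ascents_cons, if_neg (by norm_num)]
    rw [show (0:ℕ) :: List.replicate c 0 = List.replicate (c+1) 0 ++ [] from by
      simp [List.replicate_succ]]
    rw [ascents_replicate_cons, ascents_single]

lemma isAscentSeq_of (x : List ℕ) (h0 : ∀ h : 0 < x.length, x.get ⟨0, h⟩ = 0)
    (hle : ∀ v ∈ x, v ≤ 1) : IsAscentSeq x := by
  refine ⟨h0, fun i _ => ?_⟩
  have := hle _ (List.mem_iff_get.mpr ⟨i, rfl⟩)
  omega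

/-- The canonical 210-avoiding one-ascent ascent sequence of length `n`. -/
def canon (n a b : ℕ) : List ℕ :=
  List.replicate (a+1) 0 ++ (List.replicate (b+1) 1 ++ List.replicate (n-2-(a+b)) 0)

/-- For `n ≥ 2`, the number of 210-avoiding ascent sequences of length `n` with
exactly one ascent is `C(n, 2)`. -/
theorem count_210_one_ascent (n : ℕ) (hn : 2 ≤ n) :
    {x : List ℕ | x.length = n ∧ IsAscentSeq x ∧ Avoids x [2, 1, 0] ∧
      ascents x = 1}.ncard = n.choose 2 := by
  classical
  set D : Finset (ℕ × ℕ) := (Finset.range (n-1)).biUnion (fun k => Finset.HasAntidiagonal.antidiagonal k) with hDdef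
  have hD : ∀ p : ℕ × ℕ, p ∈ D ↔ p.1 + p.2 ≤ n - 2 := by
    intro p
    simp only [hDdef, Finset.mem_biUnion, Finset.mem_range, Finset.HasAntidiagonal.mem_antidiagonal]
    constructor
    · rintro ⟨k, hk, rfl⟩; omega
    · intro h; exact ⟨p.1 + p.2, by omega, rfl⟩
  -- injectivity of canon on D
  have hinj : Set.InjOn (fun p : ℕ × ℕ => canon n p.1 p.2) ↑D := by
    rintro ⟨a, b⟩ ha ⟨a', b'⟩ hb h
    simp only [canon] at h
    have htw := congrArg (List.takeWhile (fun z => z == 0)) h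
    rw [show List.replicate (b+1) 1 ++ List.replicate (n-2-(a+b)) 0
        = 1 :: (List.replicate b 1 ++ List.replicate (n-2-(a+b)) 0) from by
        rw [List.replicate_succ]; rfl] at htw
    rw [show List.replicate (b'+1) 1 ++ List.replicate (n-2-(a'+b')) 0
        = 1 :: (List.replicate b' 1 ++ List.replicate (n-2-(a'+b')) 0) from by
        rw [List.replicate_succ]; rfl] at htw
    rw [takeWhile_zero, takeWhile_zero] at htw
    have ha' : a = a' := by
      have := congrArg List.length htw
      simpa using this
    subst ha'
    have h2 := List.append_cancel_left h
    have htw2 := congrArg (List.takeWhile (fun z => z == 1)) h2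
    rw [takeWhile_one, takeWhile_one] at htw2
    have hb' : b = b' := by
      have := congrArg List.length htw2
      simpa using this
    simp [hb']
  -- set equality
  have hset : {x : List ℕ | x.length = n ∧ IsAscentSeq x ∧ Avoids x [2, 1, 0] ∧
      ascents x = 1} = ↑(D.image (fun p : ℕ × ℕ => canon n p.1 p.2)) := by
    ext x
    simp only [Set.mem_setOf_eq, Finset.coe_image, Set.mem_image, Finset.mem_coe]
    constructor
    · rintro ⟨hlen, hasc, havoid, h1⟩
      have hpos : 0 < x.length := by omega
      obtain ⟨h, t, rfl⟩ : ∃ h t, x = h :: t := by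
        cases x with
        | nil => simp at hpos
        | cons h t => exact ⟨h, t, rfl⟩
      have h0 : h = 0 := hasc.1 hpos
      subst h0
      have hle := le_one_of_ascents_le_one _ hasc (by omega)
      obtain ⟨p, q, r, hp, hq, heq⟩ :=
        shape_main t (fun v hv => hle v (List.mem_cons_of_mem _ hv)) h1
      have hlen2 : p + q + r = n := by
        have hL := congrArg List.length heq
        simp only [List.length_cons, List.length_append, List.length_replicate] at hL
        simp only [List.length_cons] at hlen
        omega
      refine ⟨(p - 1, q - 1), (hD _).mpr (by simp; omega), ?_⟩
      simp only [canon]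
      rw [show p - 1 + 1 = p from by omega, show q - 1 + 1 = q from by omega,
        show n - 2 - (p - 1 + (q - 1)) = r from by omega]
      rw [← List.append_assoc, ← heq]
    · rintro ⟨⟨a, b⟩, hmem, rfl⟩
      have hab : a + b ≤ n - 2 := (hD _).mp hmem
      have hcons : canon n a b
          = 0 :: (List.replicate a 0 ++ (List.replicate (b+1) 1 ++ List.replicate (n-2-(a+b)) 0)) := by
        rw [canon, List.replicate_succ]; rfl
      have hmemle : ∀ v ∈ canon n a b, v ≤ 1 := fun v hv => mem_canon_le_one _ _ _ _ hv
      refine ⟨?_, ?_, avoids_of_le_one _ hmemle, ascents_canon a b _⟩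
      · simp only [canon, List.length_append, List.length_replicate]
        omega
      · refine isAscentSeq_of _ ?_ hmemle
        intro h
        simp only [List.get_eq_getElem]
        rw [List.getElem_of_eq hcons]
        simp
  rw [hset, Set.ncard_coe_finset, Finset.card_image_of_injOn hinj]
  -- cardinality of D
  have hcard : D.card = ∑ k ∈ Finset.range (n-1), (k + 1) := by
    rw [hDdef, Finset.card_biUnion]
    · exact Finset.sum_congr rfl (fun k _ => Finset.Nat.card_antidiagonal k)
    · intro i _ j _ hij
      simp only [Finset.disjoint_left]
      intro p hp hq
      rw [Finset.HasAntidiagonal.mem_antidiagonal] at hp hq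
      omega
  rw [hcard]
  obtain ⟨m, rfl⟩ : ∃ m, n = m + 2 := ⟨n - 2, by omega⟩
  rw [show m + 2 - 1 = m + 1 from rfl]
  have hg : (∑ k ∈ Finset.range (m+1), k) * 2 = (m+1) * m := by
    have := Finset.sum_range_id_mul_two (m+1)
    simpa using this
  have hsplit : ∑ k ∈ Finset.range (m+1), (k + 1)
      = (∑ k ∈ Finset.range (m+1), k) + (m+1) := by
    rw [Finset.sum_add_distrib]
    simp
  rw [hsplit]
  rw [Nat.choose_two_right]
  have he : (m+2) * (m+2-1) = (m+1) * m + 2 * (m+1) := by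
    rw [show m+2-1 = m+1 from rfl]; ring
  omega
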